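/- arXiv:2004.09258 — 10 statements merged into one kernel-verified Lean document; each statement's English description precedes it below -/
import Mathlib

section
/- Optimality of the two-arm policy under complementary slackness (LP perturbation theorem): let μ ∈ [0,1]^N, r ∈ (0,1]^N, η ∈ [0,1], and suppose arms 1 and 2 satisfy 0 < μ_1 < η < μ_2 ≤ 1 and r_1·μ_1 > r_2·μ_2. For i ∉ {1,2} define the slack threshold ξ_i = (r_1 − r_2)·μ_1·μ_2/((r_i − r_2)·μ_2 − (r_i − r_1)·μ_1) (whose denominator is strictly positive under these assumptions), and assume μ_i < ξ_i for every i ∉ {1,2}. Then the vector x* with x*_1 = (μ_2 − η)/(μ_2 − μ_1), x*_2 = (η − μ_1)/(μ_2 − μ_1), x*_i = 0 for i ∉ {1,2}, is an optimal solution of LP(μ): every feasible x satisfies Σ_i x_i·μ_i·r_i ≤ Σ_i x*_i·μ_i·r_i. -/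
/-- Optimality of the two-arm policy under complementary slackness: with arms `a` (arm 1)
and `b` (arm 2) satisfying `0 < μ a < η < μ b ≤ 1` and `r a * μ a > r b * μ b`, if every
other arm `i` satisfies `μ i < ξ i` where
`ξ i = (r a - r b) * μ a * μ b / ((r i - r b) * μ b - (r i - r a) * μ a)`
(the denominator being strictly positive under these assumptions), then the vector `x*`
with `x* a = (μ b - η)/(μ b - μ a)`, `x* b = (η - μ a)/(μ b - μ a)` and `x* i = 0`
otherwise is an optimal solution of `LP(μ)`: every feasible `x` has objective value at
most that of `x*`. -/
theorem two_arm_policy_optimal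
    (N : ℕ) (μ r : Fin N → ℝ) (η : ℝ) (a b : Fin N) (hab : a ≠ b)
    (hμ : ∀ i, μ i ∈ Set.Icc (0 : ℝ) 1)
    (hr : ∀ i, r i ∈ Set.Ioc (0 : ℝ) 1)
    (hη : η ∈ Set.Icc (0 : ℝ) 1)
    (hμa : 0 < μ a) (haη : μ a < η) (hηb : η < μ b) (hμb : μ b ≤ 1)
    (hrev : r a * μ a > r b * μ b)
    (hslack : ∀ i, i ≠ a → i ≠ b →
      μ i < (r a - r b) * μ a * μ b / ((r i - r b) * μ b - (r i - r a) * μ a))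
    (xs : Fin N → ℝ)
    (hxa : xs a = (μ b - η) / (μ b - μ a))
    (hxb : xs b = (η - μ a) / (μ b - μ a))
    (hxo : ∀ i, i ≠ a → i ≠ b → xs i = 0) :
    (∀ i, i ≠ a → i ≠ b →
      0 < (r i - r b) * μ b - (r i - r a) * μ a) ∧
    ∀ x : Fin N → ℝ, (∀ i, 0 ≤ x i) → (∑ i, x i = 1) → (η ≤ ∑ i, x i * μ i) →
      ∑ i, x i * μ i * r i ≤ ∑ i, xs i * μ i * r i := by
  have hd : (0:ℝ) < μ b - μ a := by linarith
  have hdne : μ b - μ a ≠ 0 := ne_of_gt hd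
  have hD : ∀ i, i ≠ a → i ≠ b → 0 < (r i - r b) * μ b - (r i - r a) * μ a := by
    intro i _ _
    have hri : 0 < r i := (hr i).1
    nlinarith [mul_pos hri hd]
  refine ⟨hD, ?_⟩
  intro x hx hx1 hxη
  set lam : ℝ := (r b * μ b - r a * μ a) / (μ b - μ a) with hlam
  set ν : ℝ := (r a - r b) * μ a * μ b / (μ b - μ a) with hν
  have hlam_nonpos : lam ≤ 0 := by
    apply div_nonpos_of_nonpos_of_nonneg <;> linarith
  -- pointwise dual bound
  have hpt : ∀ i, μ i * r i ≤ ν + lam * μ i := by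
    intro i
    by_cases hia : i = a
    · subst hia
      rw [hlam, hν, div_mul_eq_mul_div, ← add_div, le_div_iff₀ hd]
      apply le_of_eq; ring
    · by_cases hib : i = b
      · subst hib
        rw [hlam, hν, div_mul_eq_mul_div, ← add_div, le_div_iff₀ hd]
        apply le_of_eq; ring
      · have hDi := hD i hia hib
        have hs := hslack i hia hib
        rw [lt_div_iff₀ hDi] at hs
        rw [hlam, hν, div_mul_eq_mul_div, ← add_div, le_div_iff₀ hd]
        nlinarith
  -- the value of xs equals ν + lam * η
  have hxs_val : ∑ i, xs i * μ i * r i = ν + lam * η := by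
    have hsub : ({a, b} : Finset (Fin N)) ⊆ Finset.univ := Finset.subset_univ _
    have heq : ∑ i ∈ ({a, b} : Finset (Fin N)), xs i * μ i * r i
        = ∑ i, xs i * μ i * r i := by
      apply Finset.sum_subset hsub
      intro i _ hi
      simp only [Finset.mem_insert, Finset.mem_singleton, not_or] at hi
      rw [hxo i hi.1 hi.2]; ring
    rw [← heq, Finset.sum_pair hab, hxa, hxb, hlam, hν]
    field_simp
    ring
  rw [hxs_val]
  calc ∑ i, x i * μ i * r i ≤ ∑ i, x i * (ν + lam * μ i) := by
        apply Finset.sum_le_sum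
        intro i _
        rw [mul_assoc]
        exact mul_le_mul_of_nonneg_left (hpt i) (hx i)
    _ = ν * (∑ i, x i) + lam * (∑ i, x i * μ i) := by
        rw [Finset.mul_sum, Finset.mul_sum, ← Finset.sum_add_distrib]
        congr 1; funext i; ring
    _ ≤ ν + lam * η := by
        rw [hx1, mul_one]
        have : lam * (∑ i, x i * μ i) ≤ lam * η :=
          mul_le_mul_of_nonpos_left hxη hlam_nonpos
        linarith
end

section
/- Uniqueness of the optimal solution under strict complementary slackness: let μ ∈ [0,1]^N, r ∈ (0,1]^N, η ∈ [0,1], and suppose arms 1 and 2 satisfy 0 < μ_1 < η < μ_2 ≤ 1 and r_1·μ_1 > r_2·μ_2, and that μ_i < ξ_i for every i ∉ {1,2}, where ξ_i = (r_1 − r_2)·μ_1·μ_2/((r_i − r_2)·μ_2 − (r_i − r_1)·μ_1). Then any feasible x that attains the maximum of Σ_i x_i·μ_i·r_i over all feasible vectors must equal x*, i.e., x_1 = (μ_2 − η)/(μ_2 − μ_1), x_2 = (η − μ_1)/(μ_2 − μ_1), and x_i = 0 for every i ∉ {1,2}. -/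
/-- Uniqueness of the optimal solution under strict complementary slackness: with arms
`a` (arm 1) and `b` (arm 2) satisfying `0 < μ a < η < μ b ≤ 1` and
`r a * μ a > r b * μ b`, and with `μ i < ξ i` for every other arm `i`, where
`ξ i = (r a - r b) * μ a * μ b / ((r i - r b) * μ b - (r i - r a) * μ a)`, any feasible
`x` attaining the maximum of `∑ i, x i * μ i * r i` over the feasible set must equal
`x*`, i.e. `x a = (μ b - η)/(μ b - μ a)`, `x b = (η - μ a)/(μ b - μ a)` and `x i = 0`
for every `i ∉ {a, b}`. -/
theorem optimal_solution_unique
    (N : ℕ) (μ r : Fin N → ℝ) (η : ℝ) (a b : Fin N) (hab : a ≠ b)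
    (hμ : ∀ i, μ i ∈ Set.Icc (0 : ℝ) 1)
    (hr : ∀ i, r i ∈ Set.Ioc (0 : ℝ) 1)
    (hη : η ∈ Set.Icc (0 : ℝ) 1)
    (hμa : 0 < μ a) (haη : μ a < η) (hηb : η < μ b) (hμb : μ b ≤ 1)
    (hrev : r a * μ a > r b * μ b)
    (hslack : ∀ i, i ≠ a → i ≠ b →
      μ i < (r a - r b) * μ a * μ b / ((r i - r b) * μ b - (r i - r a) * μ a))
    (x : Fin N → ℝ)
    (hx0 : ∀ i, 0 ≤ x i) (hx1 : ∑ i, x i = 1) (hxη : η ≤ ∑ i, x i * μ i)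
    (hmax : ∀ y : Fin N → ℝ, (∀ i, 0 ≤ y i) → (∑ i, y i = 1) →
      (η ≤ ∑ i, y i * μ i) → ∑ i, y i * μ i * r i ≤ ∑ i, x i * μ i * r i) :
    x a = (μ b - η) / (μ b - μ a) ∧
    x b = (η - μ a) / (μ b - μ a) ∧
    ∀ i, i ≠ a → i ≠ b → x i = 0 := by
  have hd : (0:ℝ) < μ b - μ a := by linarith
  have hdne : μ b - μ a ≠ 0 := hd.ne'
  have hrb0 : 0 < r b := (hr b).1
  have hrab : r b < r a := by nlinarith
  set lam := (r b * μ b - r a * μ a) / (μ b - μ a) with hlam_def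
  set ν := μ a * μ b * (r a - r b) / (μ b - μ a) with hnu_def
  have hlam : lam < 0 := div_neg_of_neg_of_pos (by linarith) hd
  set f : Fin N → ℝ := fun i => μ i * r i - (lam * μ i + ν) with hf_def
  have hfa : f a = 0 := by
    simp only [hf_def, hlam_def, hnu_def]
    field_simp
    ring
  have hfb : f b = 0 := by
    simp only [hf_def, hlam_def, hnu_def]
    field_simp
    ring
  have hfneg : ∀ i, i ≠ a → i ≠ b → f i < 0 := by
    intro i hia hib
    have hri := (hr i).1
    have hD : 0 < (r i - r b) * μ b - (r i - r a) * μ a := by nlinarith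
    have h1 : μ i * ((r i - r b) * μ b - (r i - r a) * μ a)
        < (r a - r b) * μ a * μ b := (lt_div_iff₀ hD).mp (hslack i hia hib)
    have h2 : (μ b - μ a) * f i
        = μ i * ((r i - r b) * μ b - (r i - r a) * μ a)
          - (r a - r b) * μ a * μ b := by
      simp only [hf_def, hlam_def, hnu_def]
      field_simp
      ring
    nlinarith
  have hfle : ∀ i, f i ≤ 0 := by
    intro i
    by_cases h1 : i = a
    · simp [h1, hfa]
    by_cases h2 : i = b
    · simp [h2, hfb]
    exact (hfneg i h1 h2).le
  -- Define the candidate optimal solution y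
  set p := (μ b - η) / (μ b - μ a) with hp_def
  set q := (η - μ a) / (μ b - μ a) with hq_def
  have hp : 0 ≤ p := div_nonneg (by linarith) hd.le
  have hq : 0 ≤ q := div_nonneg (by linarith) hd.le
  set y : Fin N → ℝ := fun i => if i = a then p else if i = b then q else 0 with hy_def
  have hsum : ∀ c : Fin N → ℝ, ∑ i, y i * c i = p * c a + q * c b := by
    intro c
    have h1 : ∑ i, y i * c i = ∑ i ∈ ({a, b} : Finset (Fin N)), y i * c i := by
      refine (Finset.sum_subset (Finset.subset_univ _) ?_).symm
      intro i _ hi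
      simp only [Finset.mem_insert, Finset.mem_singleton, not_or] at hi
      simp [hy_def, hi.1, hi.2]
    rw [h1, Finset.sum_pair hab]
    simp [hy_def, hab.symm]
  have hy0 : ∀ i, 0 ≤ y i := by
    intro i
    simp only [hy_def]
    split_ifs <;> simp [hp, hq]
  have hy1 : ∑ i, y i = 1 := by
    have := hsum (fun _ => 1)
    simp only [mul_one] at this
    rw [this, hp_def, hq_def, ← add_div,
      show μ b - η + (η - μ a) = μ b - μ a by ring, div_self hdne]
  have hyη : ∑ i, y i * μ i = η := by
    rw [hsum μ, hp_def, hq_def]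
    field_simp
    ring
  have hymax : ∑ i, y i * μ i * r i ≤ ∑ i, x i * μ i * r i :=
    hmax y hy0 hy1 hyη.ge
  have hyval : ∑ i, y i * μ i * r i = lam * η + ν := by
    have h1 : ∑ i, y i * μ i * r i = ∑ i, y i * (μ i * r i) := by
      apply Finset.sum_congr rfl; intro i _; ring
    rw [h1, hsum (fun i => μ i * r i), hp_def, hq_def, hlam_def, hnu_def]
    field_simp
    ring
  -- key identity on x
  have hS : ∑ i, x i * μ i * r i
      = (∑ i, x i * f i) + lam * (∑ i, x i * μ i) + ν := by
    have h1 : ∀ i ∈ Finset.univ, x i * μ i * r i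
        = x i * f i + lam * (x i * μ i) + ν * x i := by
      intro i _
      simp only [hf_def]
      ring
    rw [Finset.sum_congr rfl h1, Finset.sum_add_distrib, Finset.sum_add_distrib,
      ← Finset.mul_sum, ← Finset.mul_sum, hx1, mul_one]
  have hterm : ∀ i ∈ Finset.univ, x i * f i ≤ 0 := fun i _ =>
    mul_nonpos_of_nonneg_of_nonpos (hx0 i) (hfle i)
  have hT0 : (∑ i, x i * f i) ≤ 0 := Finset.sum_nonpos hterm
  have hlamC : lam * (∑ i, x i * μ i) ≤ lam * η :=
    mul_le_mul_of_nonpos_left hxη hlam.le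
  have hTz : (∑ i, x i * f i) = 0 := by
    have := hymax
    rw [hyval, hS] at this
    linarith
  have hCη : (∑ i, x i * μ i) = η := by
    have h1 : lam * η ≤ lam * (∑ i, x i * μ i) := by
      have := hymax
      rw [hyval, hS, hTz] at this
      linarith
    have h2 : lam * (∑ i, x i * μ i) = lam * η := le_antisymm hlamC h1
    exact mul_left_cancel₀ hlam.ne h2
  have hxz : ∀ i, i ≠ a → i ≠ b → x i = 0 := by
    intro i hia hib
    have h1 := (Finset.sum_eq_zero_iff_of_nonpos hterm).mp hTz i (Finset.mem_univ i)
    rcases mul_eq_zero.mp h1 with h | h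
    · exact h
    · exact absurd h (hfneg i hia hib).ne
  -- now compute sums restricted to {a, b}
  have hsx : ∀ c : Fin N → ℝ, ∑ i, x i * c i = x a * c a + x b * c b := by
    intro c
    have h1 : ∑ i, x i * c i = ∑ i ∈ ({a, b} : Finset (Fin N)), x i * c i := by
      refine (Finset.sum_subset (Finset.subset_univ _) ?_).symm
      intro i _ hi
      simp only [Finset.mem_insert, Finset.mem_singleton, not_or] at hi
      rw [hxz i hi.1 hi.2, zero_mul]
    rw [h1, Finset.sum_pair hab]
  have e1 : x a + x b = 1 := by
    have := hsx (fun _ => 1)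
    simp only [mul_one] at this
    rw [← this, hx1]
  have e2 : x a * μ a + x b * μ b = η := by
    rw [← hsx μ, hCη]
  refine ⟨?_, ?_, hxz⟩
  · rw [eq_div_iff hdne]
    linear_combination μ b * e1 - e2
  · rw [eq_div_iff hdne]
    linear_combination e2 - μ a * e1
end

section
/- The constraint binds at any optimal solution: let μ ∈ [0,1]^N, r ∈ (0,1]^N, η ∈ [0,1], and suppose arms 1 and 2 satisfy 0 < μ_1 < η < μ_2 ≤ 1 and r_1·μ_1 > r_2·μ_2, and that μ_i < ξ_i for every i ∉ {1,2}, where ξ_i = (r_1 − r_2)·μ_1·μ_2/((r_i − r_2)·μ_2 − (r_i − r_1)·μ_1). Then every feasible x that maximizes Σ_i x_i·μ_i·r_i over the feasible set satisfies Σ_i x_i·μ_i = η. -/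
/-- The constraint binds at any optimal solution: with arms `a` (arm 1) and `b` (arm 2)
satisfying `0 < μ a < η < μ b ≤ 1` and `r a * μ a > r b * μ b`, and with `μ i < ξ i` for
every other arm `i`, where
`ξ i = (r a - r b) * μ a * μ b / ((r i - r b) * μ b - (r i - r a) * μ a)`, every feasible
`x` maximizing `∑ i, x i * μ i * r i` over the feasible set satisfies
`∑ i, x i * μ i = η`. -/
theorem constraint_binds_at_optimum
    (N : ℕ) (μ r : Fin N → ℝ) (η : ℝ) (a b : Fin N) (hab : a ≠ b)
    (hμ : ∀ i, μ i ∈ Set.Icc (0 : ℝ) 1)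
    (hr : ∀ i, r i ∈ Set.Ioc (0 : ℝ) 1)
    (hη : η ∈ Set.Icc (0 : ℝ) 1)
    (hμa : 0 < μ a) (haη : μ a < η) (hηb : η < μ b) (hμb : μ b ≤ 1)
    (hrev : r a * μ a > r b * μ b)
    (hslack : ∀ i, i ≠ a → i ≠ b →
      μ i < (r a - r b) * μ a * μ b / ((r i - r b) * μ b - (r i - r a) * μ a))
    (x : Fin N → ℝ)
    (hx0 : ∀ i, 0 ≤ x i) (hx1 : ∑ i, x i = 1) (hxη : η ≤ ∑ i, x i * μ i)
    (hmax : ∀ y : Fin N → ℝ, (∀ i, 0 ≤ y i) → (∑ i, y i = 1) →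
      (η ≤ ∑ i, y i * μ i) → ∑ i, y i * μ i * r i ≤ ∑ i, x i * μ i * r i) :
    ∑ i, x i * μ i = η := by
  by_contra hne
  have hS : η < ∑ i, x i * μ i := lt_of_le_of_ne hxη (Ne.symm hne)
  -- find a supported arm with mean above η
  have hk : ∃ k, 0 < x k ∧ η < μ k := by
    by_contra hc
    push_neg at hc
    have hle : ∑ i, x i * μ i ≤ ∑ i, x i * η := by
      apply Finset.sum_le_sum
      intro i _
      rcases eq_or_lt_of_le (hx0 i) with h | h
      · simp [← h]
      · exact mul_le_mul_of_nonneg_left (hc i h) (hx0 i)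
    rw [← Finset.sum_mul, hx1, one_mul] at hle
    linarith
  obtain ⟨k, hxk, hkη⟩ := hk
  have hka : μ a < μ k := haη.trans hkη
  have hkane : k ≠ a := fun h => absurd hka (by rw [h]; exact lt_irrefl _)
  have hba : μ a < μ b := haη.trans hηb
  -- key inequality : r k * μ k < r a * μ a
  have hkey : r k * μ k < r a * μ a := by
    by_cases hkb : k = b
    · rw [hkb]; exact hrev
    · have hD : 0 < (r k - r b) * μ b - (r k - r a) * μ a := by
        nlinarith [mul_pos (hr k).1 (sub_pos.mpr hba)]
      have h1 := hslack k hkane hkb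
      rw [lt_div_iff₀ hD] at h1
      nlinarith [mul_pos (sub_pos.mpr hka) (sub_pos.mpr hrev), sub_pos.mpr hba]
  -- the improving perturbation
  set ε : ℝ := min (x k) ((∑ i, x i * μ i - η) / (μ k - μ a)) with hε
  have hε0 : 0 < ε :=
    lt_min hxk (div_pos (sub_pos.mpr hS) (sub_pos.mpr hka))
  have hεk : ε ≤ x k := min_le_left _ _
  have hεS : ε * (μ k - μ a) ≤ (∑ i, x i * μ i) - η := by
    have := min_le_right (x k) ((∑ i, x i * μ i - η) / (μ k - μ a))
    rw [le_div_iff₀ (sub_pos.mpr hka)] at this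
    linarith
  set y : Fin N → ℝ := fun i => x i + (if i = a then ε else 0) - (if i = k then ε else 0)
    with hy
  have key : ∀ f : Fin N → ℝ,
      ∑ i, y i * f i = (∑ i, x i * f i) + ε * f a - ε * f k := by
    intro f
    simp [hy, sub_mul, add_mul, Finset.sum_sub_distrib, Finset.sum_add_distrib,
      ite_mul, Finset.sum_ite_eq']
  have hy0 : ∀ i, 0 ≤ y i := by
    intro i
    simp only [hy]
    split_ifs with h1 h2 h2
    · exact absurd (h1 ▸ h2 : a = k) hkane.symm.elim
    · linarith [hx0 i, hε0.le]
    · rw [h2]; linarith [hεk]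
    · linarith [hx0 i]
  have hy1 : ∑ i, y i = 1 := by
    have := key (fun _ => 1)
    simp only [mul_one] at this
    rw [this, hx1]; ring
  have hyμ : η ≤ ∑ i, y i * μ i := by
    rw [key μ]; linarith
  have hobj : ∑ i, x i * μ i * r i < ∑ i, y i * μ i * r i := by
    have h2 : ∑ i, y i * (μ i * r i) = (∑ i, x i * (μ i * r i)) + ε * (μ a * r a)
        - ε * (μ k * r k) := key (fun i => μ i * r i)
    simp only [← mul_assoc] at h2
    rw [h2]
    nlinarith [mul_pos hε0 (sub_pos.mpr hkey)]
  exact absurd (hmax y hy0 hy1 hyμ) (not_le.mpr hobj)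
end

section
/- Suboptimal arms receive zero probability mass: let μ ∈ [0,1]^N, r ∈ (0,1]^N, η ∈ [0,1], with 0 < μ_1 < η < μ_2 ≤ 1 and r_1·μ_1 > r_2·μ_2, let λ* = (r_1·μ_1 − r_2·μ_2)/(μ_2 − μ_1) and ν* = (r_1 − r_2)·μ_1·μ_2/(μ_2 − μ_1), and assume r_i·μ_i + λ*·μ_i < ν* for every i ∉ {1,2}. Then every feasible x that maximizes Σ_i x_i·μ_i·r_i over the feasible set satisfies x_i = 0 for every arm i ∉ {1,2}. -/
/-- Suboptimal arms receive zero probability mass: with arms `a` (arm 1) and `b` (arm 2)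
satisfying `0 < μ a < η < μ b ≤ 1` and `r a * μ a > r b * μ b`, dual variables
`λ* = (r a * μ a - r b * μ b)/(μ b - μ a)`, `ν* = (r a - r b) * μ a * μ b/(μ b - μ a)`,
and strict dual slackness `r i * μ i + λ* * μ i < ν*` for every other arm `i`, every
feasible `x` maximizing `∑ i, x i * μ i * r i` over the feasible set satisfies `x i = 0`
for every arm `i ∉ {a, b}`. -/
theorem suboptimal_arms_zero_mass
    (N : ℕ) (μ r : Fin N → ℝ) (η : ℝ) (a b : Fin N) (hab : a ≠ b)
    (hμ : ∀ i, μ i ∈ Set.Icc (0 : ℝ) 1)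
    (hr : ∀ i, r i ∈ Set.Ioc (0 : ℝ) 1)
    (hη : η ∈ Set.Icc (0 : ℝ) 1)
    (hμa : 0 < μ a) (haη : μ a < η) (hηb : η < μ b) (hμb : μ b ≤ 1)
    (hrev : r a * μ a > r b * μ b)
    (hslack : ∀ i, i ≠ a → i ≠ b →
      r i * μ i + ((r a * μ a - r b * μ b) / (μ b - μ a)) * μ i
        < (r a - r b) * μ a * μ b / (μ b - μ a))
    (x : Fin N → ℝ)
    (hx0 : ∀ i, 0 ≤ x i) (hx1 : ∑ i, x i = 1) (hxη : η ≤ ∑ i, x i * μ i)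
    (hmax : ∀ y : Fin N → ℝ, (∀ i, 0 ≤ y i) → (∑ i, y i = 1) →
      (η ≤ ∑ i, y i * μ i) → ∑ i, y i * μ i * r i ≤ ∑ i, x i * μ i * r i) :
    ∀ i, i ≠ a → i ≠ b → x i = 0 := by
  classical
  have hdpos : (0:ℝ) < μ b - μ a := by linarith
  have hdne : μ b - μ a ≠ 0 := ne_of_gt hdpos
  set lam := (r a * μ a - r b * μ b) / (μ b - μ a) with hlamdef
  set nu := (r a - r b) * μ a * μ b / (μ b - μ a) with hnudef
  have hlam : 0 < lam := div_pos (by linarith) hdpos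
  set c : Fin N → ℝ := fun j => μ j * r j + lam * μ j - nu with hc
  have hca : c a = 0 := by
    simp only [hc, hlamdef, hnudef]
    field_simp
    ring
  have hcb : c b = 0 := by
    simp only [hc, hlamdef, hnudef]
    field_simp
    ring
  have hcneg : ∀ j, j ≠ a → j ≠ b → c j < 0 := by
    intro j h1 h2
    have := hslack j h1 h2
    simp only [hc]
    nlinarith [this]
  have hcle : ∀ j, c j ≤ 0 := by
    intro j
    by_cases h1 : j = a
    · rw [h1, hca]
    by_cases h2 : j = b
    · rw [h2, hcb]
    exact le_of_lt (hcneg j h1 h2)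
  -- helper: sums of functions supported on {a,b}
  have hsum : ∀ f : Fin N → ℝ, (∀ j, j ≠ a → j ≠ b → f j = 0) →
      ∑ j, f j = f a + f b := by
    intro f hf
    rw [← Finset.sum_subset (Finset.subset_univ ({a, b} : Finset (Fin N)))]
    · rw [Finset.sum_insert (by simpa using hab), Finset.sum_singleton]
    · intro j _ hj
      simp only [Finset.mem_insert, Finset.mem_singleton, not_or] at hj
      exact hf j hj.1 hj.2
  -- the candidate optimal point
  set y : Fin N → ℝ := fun j =>
    if j = a then (μ b - η) / (μ b - μ a)
    else if j = b then (η - μ a) / (μ b - μ a) else 0 with hy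
  have hya : y a = (μ b - η) / (μ b - μ a) := by simp [hy]
  have hyb : y b = (η - μ a) / (μ b - μ a) := by simp [hy, hab.symm]
  have hyzero : ∀ j, j ≠ a → j ≠ b → y j = 0 := by
    intro j h1 h2; simp [hy, h1, h2]
  have hy0 : ∀ j, 0 ≤ y j := by
    intro j
    by_cases h1 : j = a
    · rw [h1, hya]; exact div_nonneg (by linarith) (le_of_lt hdpos)
    by_cases h2 : j = b
    · rw [h2, hyb]
      apply div_nonneg (by linarith) (le_of_lt hdpos)
    · rw [hyzero j h1 h2]
  have hy1 : ∑ j, y j = 1 := by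
    rw [hsum y hyzero, hya, hyb]
    field_simp
    ring
  have hyμ : ∑ j, y j * μ j = η := by
    rw [hsum (fun j => y j * μ j) (fun j h1 h2 => by simp [hyzero j h1 h2]),
      hya, hyb]
    field_simp
    ring
  have hyobj : ∑ j, y j * μ j * r j = nu - lam * η := by
    rw [hsum (fun j => y j * μ j * r j) (fun j h1 h2 => by simp [hyzero j h1 h2]),
      hya, hyb, hnudef, hlamdef]
    field_simp
    ring
  have hge : nu - lam * η ≤ ∑ j, x j * μ j * r j := by
    rw [← hyobj]
    exact hmax y hy0 hy1 (le_of_eq hyμ.symm)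
  have hid : ∑ j, x j * μ j * r j
      = (∑ j, x j * c j) - lam * (∑ j, x j * μ j) + nu := by
    have h1 : ∀ j ∈ Finset.univ, x j * μ j * r j
        = x j * c j - lam * (x j * μ j) + nu * x j := by
      intro j _; simp only [hc]; ring
    rw [Finset.sum_congr rfl h1, Finset.sum_add_distrib, Finset.sum_sub_distrib,
      ← Finset.mul_sum, ← Finset.mul_sum, hx1, mul_one]
  have hxcnonneg : 0 ≤ ∑ j, x j * c j := by
    have h2 : 0 ≤ lam * ((∑ j, x j * μ j) - η) :=
      mul_nonneg (le_of_lt hlam) (by linarith)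
    nlinarith [hge, hid]
  have hxcle : ∀ j ∈ Finset.univ, x j * c j ≤ 0 := by
    intro j _
    exact mul_nonpos_of_nonneg_of_nonpos (hx0 j) (hcle j)
  have hxczero : ∑ j, x j * c j = 0 :=
    le_antisymm (Finset.sum_nonpos hxcle) hxcnonneg
  have hall := (Finset.sum_eq_zero_iff_of_nonpos hxcle).mp hxczero
  intro i h1 h2
  have hi := hall i (Finset.mem_univ i)
  rcases mul_eq_zero.mp hi with h | h
  · exact h
  · exact absurd h (ne_of_lt (hcneg i h1 h2))
end

section
/- Mass formula for optimal solutions supported on two arms: let θ ∈ [0,1]^N, r ∈ (0,1]^N, η ∈ [0,1], and let a, b be two distinct arms with θ_a < η < θ_b and r_a·θ_a > r_b·θ_b. If x is feasible for LP(θ), maximizes Σ_i x_i·θ_i·r_i over all feasible vectors, and is supported on {a,b} (i.e., x_i = 0 for every i ∉ {a,b}), then x_a = (θ_b − η)/(θ_b − θ_a) and x_b = (η − θ_a)/(θ_b − θ_a). -/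
lemma sum_two_support {N : ℕ} {a b : Fin N} (hab : a ≠ b) (f : Fin N → ℝ)
    (h : ∀ i, i ≠ a → i ≠ b → f i = 0) : ∑ i, f i = f a + f b := by
  rw [← Finset.sum_pair hab]
  exact (Finset.sum_subset (Finset.subset_univ _) (by
    intro i _ hi
    simp only [Finset.mem_insert, Finset.mem_singleton, not_or] at hi
    exact h i hi.1 hi.2)).symm

/-- Mass formula for optimal solutions supported on two arms: if `a ≠ b`,
`θ a < η < θ b`, `r a * θ a > r b * θ b`, and `x` is feasible for `LP(θ)`, maximizes
`∑ i, x i * θ i * r i` over all feasible vectors, and is supported on `{a, b}`, then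
`x a = (θ b - η)/(θ b - θ a)` and `x b = (η - θ a)/(θ b - θ a)`. -/
theorem two_arm_support_mass_formula
    (N : ℕ) (θ r : Fin N → ℝ) (η : ℝ) (a b : Fin N) (hab : a ≠ b)
    (hθ : ∀ i, θ i ∈ Set.Icc (0 : ℝ) 1)
    (hr : ∀ i, r i ∈ Set.Ioc (0 : ℝ) 1)
    (hη : η ∈ Set.Icc (0 : ℝ) 1)
    (haη : θ a < η) (hηb : η < θ b)
    (hrev : r a * θ a > r b * θ b)
    (x : Fin N → ℝ)
    (hx0 : ∀ i, 0 ≤ x i) (hx1 : ∑ i, x i = 1) (hxη : η ≤ ∑ i, x i * θ i)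
    (hmax : ∀ y : Fin N → ℝ, (∀ i, 0 ≤ y i) → (∑ i, y i = 1) →
      (η ≤ ∑ i, y i * θ i) → ∑ i, y i * θ i * r i ≤ ∑ i, x i * θ i * r i)
    (hsupp : ∀ i, i ≠ a → i ≠ b → x i = 0) :
    x a = (θ b - η) / (θ b - θ a) ∧ x b = (η - θ a) / (θ b - θ a) := by
  have hba : θ a < θ b := haη.trans hηb
  have hsum : x a + x b = 1 := by
    rw [← hx1]; exact (sum_two_support hab x hsupp).symm
  have hSθ : ∑ i, x i * θ i = x a * θ a + x b * θ b :=
    sum_two_support hab _ (fun i h1 h2 => by rw [hsupp i h1 h2, zero_mul])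
  have hSr : ∑ i, x i * θ i * r i = x a * θ a * r a + x b * θ b * r b :=
    sum_two_support hab _ (fun i h1 h2 => by rw [hsupp i h1 h2, zero_mul, zero_mul])
  -- constraint must be tight
  have htight : x a * θ a + x b * θ b = η := by
    by_contra hne
    have hstrict : η < x a * θ a + x b * θ b := lt_of_le_of_ne (hSθ ▸ hxη) (Ne.symm hne)
    have hxb : 0 < x b := by
      rcases lt_or_eq_of_le (hx0 b) with h | h
      · exact h
      · exfalso
        have hxa : x a = 1 := by linarith [h.symm ▸ hsum]
        rw [← h, hxa] at hstrict
        have := (hθ a).2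
        nlinarith
    set S := x a * θ a + x b * θ b
    set ε := min (x b) ((S - η) / (θ b - θ a)) with hε
    have hεpos : 0 < ε := lt_min hxb (div_pos (by linarith) (by linarith))
    have hεb : ε ≤ x b := min_le_left _ _
    have hεS : ε * (θ b - θ a) ≤ S - η := by
      have := min_le_right (x b) ((S - η) / (θ b - θ a))
      calc ε * (θ b - θ a) ≤ (S - η) / (θ b - θ a) * (θ b - θ a) := by
            apply mul_le_mul_of_nonneg_right this (by linarith)
        _ = S - η := div_mul_cancel₀ _ (by linarith)
    set y : Fin N → ℝ := fun i => if i = a then x a + ε else if i = b then x b - ε else x i with hy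
    have hya : y a = x a + ε := by simp only [hy, if_pos rfl]
    have hyb : y b = x b - ε := by simp only [hy]; rw [if_neg hab.symm]; simp
    have hyo : ∀ i, i ≠ a → i ≠ b → y i = x i := by intro i h1 h2; simp [hy, h1, h2]
    have hy0 : ∀ i, 0 ≤ y i := by
      intro i
      by_cases h1 : i = a
      · rw [h1, hya]; linarith [hx0 a]
      by_cases h2 : i = b
      · rw [h2, hyb]; linarith
      · rw [hyo i h1 h2]; exact hx0 i
    have hy1 : ∑ i, y i = 1 := by
      rw [sum_two_support hab y (fun i h1 h2 => by rw [hyo i h1 h2, hsupp i h1 h2]),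
        hya, hyb]
      linarith
    have hyθ : ∑ i, y i * θ i = S + ε * (θ a - θ b) := by
      rw [sum_two_support hab _ (fun i h1 h2 => by rw [hyo i h1 h2, hsupp i h1 h2, zero_mul]),
        hya, hyb]
      ring
    have hyη : η ≤ ∑ i, y i * θ i := by rw [hyθ]; nlinarith
    have hyr : ∑ i, y i * θ i * r i
        = x a * θ a * r a + x b * θ b * r b + ε * (θ a * r a - θ b * r b) := by
      rw [sum_two_support hab _
        (fun i h1 h2 => by rw [hyo i h1 h2, hsupp i h1 h2, zero_mul, zero_mul]),
        hya, hyb]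
      ring
    have := hmax y hy0 hy1 hyη
    rw [hyr, hSr] at this
    nlinarith
  constructor
  · rw [eq_div_iff (sub_ne_zero.mpr hba.ne')]
    linear_combination θ b * hsum - htight
  · rw [eq_div_iff (sub_ne_zero.mpr hba.ne')]
    linear_combination htight - θ a * hsum
end

section
/- The optimal solution of the constrained bandit LP is supported on at most two arms: let μ ∈ [0,1]^N, r ∈ (0,1]^N, η ∈ [0,1], with N ≥ 1, and suppose max_i μ_i ≥ η. Then there exists a feasible x* maximizing Σ_i x_i·μ_i·r_i over the feasible set such that x*_i ≠ 0 for at most two indices i ∈ {1,…,N}. -/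
private lemma sum_triple {N : ℕ} (a b c : Fin N) (hab : a ≠ b) (hac : a ≠ c) (hbc : b ≠ c)
    (α β γ : ℝ) (f : Fin N → ℝ) :
    ∑ i, (if i = a then α else if i = b then β else if i = c then γ else 0) * f i
      = α * f a + β * f b + γ * f c := by
  rw [← Finset.sum_subset (Finset.subset_univ ({a, b, c} : Finset (Fin N)))]
  · rw [show ({a, b, c} : Finset (Fin N)) = insert a (insert b {c}) from rfl,
      Finset.sum_insert (by simp [hab, hac]), Finset.sum_insert (by simp [hbc]),
      Finset.sum_singleton]
    simp [hab, hac, hbc, hab.symm, hac.symm, hbc.symm]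
    ring
  · intro i _ hi
    simp only [Finset.mem_insert, Finset.mem_singleton, not_or] at hi
    simp [hi.1, hi.2.1, hi.2.2]

private lemma exists_dir {N : ℕ} (μ : Fin N → ℝ) (a b c : Fin N)
    (hab : a ≠ b) (hac : a ≠ c) (hbc : b ≠ c) :
    ∃ d : Fin N → ℝ, d ≠ 0 ∧ (∀ i, i ≠ a → i ≠ b → i ≠ c → d i = 0) ∧
      (∑ i, d i = 0) ∧ (∑ i, d i * μ i = 0) := by
  by_cases h : μ a = μ b
  · refine ⟨fun i => if i = a then 1 else if i = b then -1 else if i = c then 0 else 0,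
      ?_, ?_, ?_, ?_⟩
    · intro hd; have := congrFun hd a; simp at this
    · intro i hia hib hic; simp [hia, hib, hic]
    · have h1 := sum_triple a b c hab hac hbc 1 (-1) 0 (fun _ => (1:ℝ))
      simp only [mul_one] at h1
      rw [h1]; norm_num
    · have h1 := sum_triple a b c hab hac hbc 1 (-1) 0 μ
      rw [h1]; rw [h]; ring
  · refine ⟨fun i => if i = a then μ b - μ c else if i = b then μ c - μ a
        else if i = c then μ a - μ b else 0, ?_, ?_, ?_, ?_⟩
    · intro hd; have := congrFun hd c
      simp [hac.symm, hbc.symm, sub_eq_zero] at this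
      exact h this
    · intro i hia hib hic; simp [hia, hib, hic]
    · have h1 := sum_triple a b c hab hac hbc (μ b - μ c) (μ c - μ a) (μ a - μ b)
        (fun _ => (1:ℝ))
      simp only [mul_one] at h1
      rw [h1]; ring
    · have h1 := sum_triple a b c hab hac hbc (μ b - μ c) (μ c - μ a) (μ a - μ b) μ
      rw [h1]; ring

private lemma step_reduce {N : ℕ} (μ r : Fin N → ℝ) (η : ℝ)
    (x : Fin N → ℝ) (hx0 : ∀ i, 0 ≤ x i) (hx1 : ∑ i, x i = 1) (hxη : η ≤ ∑ i, x i * μ i)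
    (hmax : ∀ y : Fin N → ℝ, (∀ i, 0 ≤ y i) → (∑ i, y i = 1) → (η ≤ ∑ i, y i * μ i) →
        ∑ i, y i * μ i * r i ≤ ∑ i, x i * μ i * r i)
    (hcard : 3 ≤ (Finset.univ.filter (fun i => x i ≠ 0)).card) :
    ∃ y : Fin N → ℝ, (∀ i, 0 ≤ y i) ∧ (∑ i, y i = 1) ∧ (η ≤ ∑ i, y i * μ i) ∧
      (∑ i, y i * μ i * r i = ∑ i, x i * μ i * r i) ∧
      (Finset.univ.filter (fun i => y i ≠ 0)).card
        < (Finset.univ.filter (fun i => x i ≠ 0)).card := by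
  classical
  set s := Finset.univ.filter (fun i => x i ≠ 0) with hs
  -- extract three distinct support elements
  obtain ⟨a, haS⟩ := Finset.card_pos.mp (by omega : 0 < s.card)
  obtain ⟨b, hbE⟩ := Finset.card_pos.mp
    (by rw [Finset.card_erase_of_mem haS]; omega : 0 < (s.erase a).card)
  obtain ⟨c, hcE⟩ := Finset.card_pos.mp
    (by rw [Finset.card_erase_of_mem hbE, Finset.card_erase_of_mem haS]; omega :
      0 < ((s.erase a).erase b).card)
  have hba : b ≠ a := (Finset.mem_erase.mp hbE).1
  have hbS : b ∈ s := (Finset.mem_erase.mp hbE).2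
  have hcb : c ≠ b := (Finset.mem_erase.mp hcE).1
  have hca : c ≠ a := (Finset.mem_erase.mp (Finset.mem_erase.mp hcE).2).1
  have hcS : c ∈ s := (Finset.mem_erase.mp (Finset.mem_erase.mp hcE).2).2
  have hxa : x a ≠ 0 := (Finset.mem_filter.mp haS).2
  have hxb : x b ≠ 0 := (Finset.mem_filter.mp hbS).2
  have hxc : x c ≠ 0 := (Finset.mem_filter.mp hcS).2
  have hxa' : 0 < x a := lt_of_le_of_ne (hx0 a) (Ne.symm hxa)
  have hxb' : 0 < x b := lt_of_le_of_ne (hx0 b) (Ne.symm hxb)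
  have hxc' : 0 < x c := lt_of_le_of_ne (hx0 c) (Ne.symm hxc)
  -- key: any feasible direction has nonpositive objective derivative
  have key : ∀ d : Fin N → ℝ, (∀ i, i ≠ a → i ≠ b → i ≠ c → d i = 0) →
      (∑ i, d i = 0) → (∑ i, d i * μ i = 0) → ∑ i, d i * μ i * r i ≤ 0 := by
    intro d hsupp hs1 hs2
    by_contra hpos
    push_neg at hpos
    set ε : ℝ := min (x a / (|d a| + 1)) (min (x b / (|d b| + 1)) (x c / (|d c| + 1))) with hε
    have hεa : ε ≤ x a / (|d a| + 1) := min_le_left _ _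
    have hεb : ε ≤ x b / (|d b| + 1) := le_trans (min_le_right _ _) (min_le_left _ _)
    have hεc : ε ≤ x c / (|d c| + 1) := le_trans (min_le_right _ _) (min_le_right _ _)
    have hεpos : 0 < ε := by
      refine lt_min (div_pos hxa' (by positivity)) (lt_min (div_pos hxb' (by positivity))
        (div_pos hxc' (by positivity)))
    have hbound : ∀ i, ε ≤ x i / (|d i| + 1) → 0 ≤ x i + ε * d i := by
      intro i hi
      have h2 : ε * (|d i| + 1) ≤ x i := (le_div_iff₀ (by positivity)).mp hi
      nlinarith [mul_le_mul_of_nonneg_left (neg_abs_le (d i)) hεpos.le]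
    have hy0 : ∀ i, 0 ≤ x i + ε * d i := by
      intro i
      by_cases hia : i = a
      · subst hia; exact hbound i hεa
      by_cases hib : i = b
      · subst hib; exact hbound i hεb
      by_cases hic : i = c
      · subst hic; exact hbound i hεc
      rw [hsupp i hia hib hic, mul_zero, add_zero]; exact hx0 i
    have hy1 : ∑ i, (x i + ε * d i) = 1 := by
      rw [Finset.sum_add_distrib, ← Finset.mul_sum, hs1, hx1]; ring
    have hyμ : ∑ i, (x i + ε * d i) * μ i = ∑ i, x i * μ i := by
      have : ∀ i ∈ Finset.univ, (x i + ε * d i) * μ i = x i * μ i + ε * (d i * μ i) :=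
        fun i _ => by ring
      rw [Finset.sum_congr rfl this, Finset.sum_add_distrib, ← Finset.mul_sum, hs2]; ring
    have hyobj : ∑ i, (x i + ε * d i) * μ i * r i
        = ∑ i, x i * μ i * r i + ε * ∑ i, d i * μ i * r i := by
      have : ∀ i ∈ Finset.univ, (x i + ε * d i) * μ i * r i
          = x i * μ i * r i + ε * (d i * μ i * r i) := fun i _ => by ring
      rw [Finset.sum_congr rfl this, Finset.sum_add_distrib, ← Finset.mul_sum]
    have := hmax (fun i => x i + ε * d i) hy0 hy1 (hyμ ▸ hxη)
    rw [hyobj] at this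
    nlinarith
  obtain ⟨d, hd0, hsupp, hds1, hds2⟩ :=
    exists_dir μ a b c (Ne.symm hba) (Ne.symm hca) (Ne.symm hcb)
  -- objective derivative is zero
  have hg1 := key d hsupp hds1 hds2
  have hg2 := key (fun i => -(d i)) (fun i hia hib hic => by show -(d i) = 0; rw [hsupp i hia hib hic, neg_zero])
    (by rw [Finset.sum_neg_distrib, hds1, neg_zero])
    (by
      have : ∀ i ∈ Finset.univ, -(d i) * μ i = -(d i * μ i) := fun i _ => by ring
      rw [Finset.sum_congr rfl this, Finset.sum_neg_distrib, hds2, neg_zero])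
  have hgeq : ∑ i, d i * μ i * r i = 0 := by
    have : ∀ i ∈ Finset.univ, -(d i) * μ i * r i = -(d i * μ i * r i) := fun i _ => by ring
    rw [Finset.sum_congr rfl this, Finset.sum_neg_distrib] at hg2
    linarith
  -- there is a negative coordinate
  have hneg : ∃ j, d j < 0 := by
    by_contra hno
    push_neg at hno
    have hall : ∀ i ∈ Finset.univ, d i = 0 :=
      (Finset.sum_eq_zero_iff_of_nonneg (fun i _ => hno i)).mp hds1
    exact hd0 (funext fun i => hall i (Finset.mem_univ i))
  -- the support classification
  have hmem3 : ∀ i, d i ≠ 0 → x i ≠ 0 := by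
    intro i hdi
    by_cases hia : i = a
    · subst hia; exact hxa
    by_cases hib : i = b
    · subst hib; exact hxb
    by_cases hic : i = c
    · subst hic; exact hxc
    exact absurd (hsupp i hia hib hic) hdi
  set T := Finset.univ.filter (fun i => d i < 0) with hT
  have hTne : T.Nonempty := by
    obtain ⟨j, hj⟩ := hneg
    exact ⟨j, Finset.mem_filter.mpr ⟨Finset.mem_univ j, hj⟩⟩
  set t : ℝ := T.inf' hTne (fun i => x i / (-(d i))) with ht
  have hmemT : ∀ i ∈ T, d i < 0 := fun i hi => (Finset.mem_filter.mp hi).2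
  have hxT : ∀ i ∈ T, 0 < x i := fun i hi =>
    lt_of_le_of_ne (hx0 i) (Ne.symm (hmem3 i (ne_of_lt (hmemT i hi))))
  have htpos : 0 < t := by
    rw [ht, Finset.lt_inf'_iff]
    exact fun i hi => div_pos (hxT i hi) (neg_pos.mpr (hmemT i hi))
  have htle : ∀ i ∈ T, t ≤ x i / (-(d i)) := fun i hi => Finset.inf'_le _ hi
  have hy0 : ∀ i, 0 ≤ x i + t * d i := by
    intro i
    by_cases hdi : d i < 0
    · have hiT : i ∈ T := Finset.mem_filter.mpr ⟨Finset.mem_univ i, hdi⟩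
      have := (le_div_iff₀ (neg_pos.mpr hdi)).mp (htle i hiT)
      nlinarith
    · push_neg at hdi
      exact add_nonneg (hx0 i) (mul_nonneg htpos.le hdi)
  have hy1 : ∑ i, (x i + t * d i) = 1 := by
    rw [Finset.sum_add_distrib, ← Finset.mul_sum, hds1, hx1]; ring
  have hyμ : ∑ i, (x i + t * d i) * μ i = ∑ i, x i * μ i := by
    have : ∀ i ∈ Finset.univ, (x i + t * d i) * μ i = x i * μ i + t * (d i * μ i) :=
      fun i _ => by ring
    rw [Finset.sum_congr rfl this, Finset.sum_add_distrib, ← Finset.mul_sum, hds2]; ring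
  have hyobj : ∑ i, (x i + t * d i) * μ i * r i = ∑ i, x i * μ i * r i := by
    have : ∀ i ∈ Finset.univ, (x i + t * d i) * μ i * r i
        = x i * μ i * r i + t * (d i * μ i * r i) := fun i _ => by ring
    rw [Finset.sum_congr rfl this, Finset.sum_add_distrib, ← Finset.mul_sum, hgeq]; ring
  obtain ⟨j, hjT, hjeq⟩ := Finset.exists_mem_eq_inf' hTne (fun i => x i / (-(d i)))
  have hdj : d j < 0 := hmemT j hjT
  have hyj : x j + t * d j = 0 := by
    rw [ht, hjeq]
    have hne : -(d j) ≠ 0 := ne_of_gt (neg_pos.mpr hdj)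
    field_simp
    rw [div_self (ne_of_lt hdj)]; ring
  have hxj : x j ≠ 0 := hmem3 j (ne_of_lt hdj)
  refine ⟨fun i => x i + t * d i, hy0, hy1, hyμ ▸ hxη, hyobj, ?_⟩
  apply Finset.card_lt_card
  rw [Finset.ssubset_iff_of_subset]
  · exact ⟨j, Finset.mem_filter.mpr ⟨Finset.mem_univ j, hxj⟩,
      fun hj => (Finset.mem_filter.mp hj).2 hyj⟩
  · intro i hi
    have hyi : x i + t * d i ≠ 0 := (Finset.mem_filter.mp hi).2
    refine Finset.mem_filter.mpr ⟨Finset.mem_univ i, ?_⟩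
    intro hxi
    by_cases hia : i = a
    · exact hxa (hia ▸ hxi)
    by_cases hib : i = b
    · exact hxb (hib ▸ hxi)
    by_cases hic : i = c
    · exact hxc (hic ▸ hxi)
    exact hyi (by rw [hxi, hsupp i hia hib hic]; ring)

/-- The optimal solution of the constrained bandit LP is supported on at most two arms:
if `max_i μ i ≥ η`, there exists a feasible maximizer `x*` of `∑ i, x i * μ i * r i`
over the feasible set with `x* i ≠ 0` for at most two indices `i`. -/
theorem LP_optimum_two_arm_support
    (N : ℕ) (hN : 1 ≤ N) (μ r : Fin N → ℝ) (η : ℝ)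
    (hμ : ∀ i, μ i ∈ Set.Icc (0 : ℝ) 1)
    (hr : ∀ i, r i ∈ Set.Ioc (0 : ℝ) 1)
    (hη : η ∈ Set.Icc (0 : ℝ) 1)
    (hfeas : η ≤ Finset.univ.sup' (Finset.univ_nonempty_iff.mpr ⟨⟨0, hN⟩⟩) μ) :
    ∃ xs : Fin N → ℝ,
      ((∀ i, 0 ≤ xs i) ∧ (∑ i, xs i = 1) ∧ (η ≤ ∑ i, xs i * μ i)) ∧
      (∀ x : Fin N → ℝ, (∀ i, 0 ≤ x i) → (∑ i, x i = 1) → (η ≤ ∑ i, x i * μ i) →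
        ∑ i, x i * μ i * r i ≤ ∑ i, xs i * μ i * r i) ∧
      ∃ a b : Fin N, ∀ i, i ≠ a → i ≠ b → xs i = 0 := by
  classical
  set S : Set (Fin N → ℝ) :=
    {x | (∀ i, 0 ≤ x i) ∧ (∑ i, x i = 1) ∧ η ≤ ∑ i, x i * μ i} with hSdef
  -- S is nonempty
  obtain ⟨i₀, -, hi₀⟩ := Finset.exists_mem_eq_sup'
    (Finset.univ_nonempty_iff.mpr ⟨(⟨0, hN⟩ : Fin N)⟩) μ
  have hSne : S.Nonempty := by
    refine ⟨fun i => if i = i₀ then 1 else 0, fun i => by positivity, ?_, ?_⟩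
    · simp
    · have : ∑ i, (if i = i₀ then (1:ℝ) else 0) * μ i = μ i₀ := by
        rw [Finset.sum_congr rfl (fun i _ => show (if i = i₀ then (1:ℝ) else 0) * μ i
          = if i = i₀ then μ i₀ else 0 by split <;> simp_all)]
        simp
      rw [this, ← hi₀]; exact hfeas
  -- S is compact
  have hSsub : S ⊆ Set.Icc (fun _ => (0:ℝ)) (fun _ => (1:ℝ)) := by
    rintro x ⟨h0, h1, -⟩
    refine ⟨fun i => h0 i, fun i => ?_⟩
    calc x i ≤ ∑ j, x j := Finset.single_le_sum (fun j _ => h0 j) (Finset.mem_univ i)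
      _ = 1 := h1
  have hclosed : IsClosed S := by
    have c1 : IsClosed {x : Fin N → ℝ | ∀ i, 0 ≤ x i} := by
      have : {x : Fin N → ℝ | ∀ i, 0 ≤ x i} = ⋂ i, {x : Fin N → ℝ | 0 ≤ x i} := by
        ext x; simp
      rw [this]
      exact isClosed_iInter fun i => isClosed_le continuous_const (continuous_apply i)
    have c2 : IsClosed {x : Fin N → ℝ | ∑ i, x i = 1} :=
      isClosed_eq (continuous_finset_sum _ fun i _ => continuous_apply i) continuous_const
    have c3 : IsClosed {x : Fin N → ℝ | η ≤ ∑ i, x i * μ i} :=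
      isClosed_le continuous_const
        (continuous_finset_sum _ fun i _ => (continuous_apply i).mul continuous_const)
    have : S = {x : Fin N → ℝ | ∀ i, 0 ≤ x i} ∩
        ({x | ∑ i, x i = 1} ∩ {x | η ≤ ∑ i, x i * μ i}) := by
      ext x; simp [hSdef, and_assoc]
    rw [this]
    exact c1.inter (c2.inter c3)
  have hScompact : IsCompact S := (isCompact_Icc).of_isClosed_subset hclosed hSsub
  have hcont : Continuous fun x : Fin N → ℝ => ∑ i, x i * μ i * r i :=
    continuous_finset_sum _ fun i _ =>
      ((continuous_apply i).mul continuous_const).mul continuous_const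
  obtain ⟨x₁, hx₁S, hx₁max⟩ := hScompact.exists_isMaxOn hSne hcont.continuousOn
  -- inductively reduce the support
  have H : ∀ k : ℕ, ∀ x : Fin N → ℝ, (∀ i, 0 ≤ x i) → (∑ i, x i = 1) →
      (η ≤ ∑ i, x i * μ i) →
      (∀ y : Fin N → ℝ, (∀ i, 0 ≤ y i) → (∑ i, y i = 1) → (η ≤ ∑ i, y i * μ i) →
        ∑ i, y i * μ i * r i ≤ ∑ i, x i * μ i * r i) →
      (Finset.univ.filter (fun i => x i ≠ 0)).card ≤ k →
      ∃ xs : Fin N → ℝ, (∀ i, 0 ≤ xs i) ∧ (∑ i, xs i = 1) ∧ (η ≤ ∑ i, xs i * μ i) ∧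
        (∀ y : Fin N → ℝ, (∀ i, 0 ≤ y i) → (∑ i, y i = 1) → (η ≤ ∑ i, y i * μ i) →
          ∑ i, y i * μ i * r i ≤ ∑ i, xs i * μ i * r i) ∧
        (Finset.univ.filter (fun i => xs i ≠ 0)).card ≤ 2 := by
    intro k
    induction k with
    | zero =>
      intro x h0 h1 h2 h3 hc
      exact ⟨x, h0, h1, h2, h3, by omega⟩
    | succ n ih =>
      intro x h0 h1 h2 h3 hc
      by_cases hle : (Finset.univ.filter (fun i => x i ≠ 0)).card ≤ 2
      · exact ⟨x, h0, h1, h2, h3, hle⟩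
      · push_neg at hle
        obtain ⟨y, hy0, hy1, hy2, hyobj, hycard⟩ :=
          step_reduce μ r η x h0 h1 h2 h3 (by omega)
        refine ih y hy0 hy1 hy2 (fun z hz0 hz1 hz2 => ?_) (by omega)
        rw [hyobj]; exact h3 z hz0 hz1 hz2
  have hx₁max' : ∀ y : Fin N → ℝ, (∀ i, 0 ≤ y i) → (∑ i, y i = 1) →
      (η ≤ ∑ i, y i * μ i) → ∑ i, y i * μ i * r i ≤ ∑ i, x₁ i * μ i * r i :=
    fun y hy0 hy1 hy2 => hx₁max ⟨hy0, hy1, hy2⟩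
  obtain ⟨xs, h0, h1, h2, h3, hcard2⟩ := H N x₁ hx₁S.1 hx₁S.2.1 hx₁S.2.2 hx₁max'
    (le_trans (Finset.card_filter_le _ _) (by simp))
  refine ⟨xs, ⟨h0, h1, h2⟩, h3, ?_⟩
  -- extract the two support indices
  set s := Finset.univ.filter (fun i => xs i ≠ 0) with hs
  have hnotmem : ∀ i, i ∉ s → xs i = 0 := by
    intro i hi
    by_contra hne
    exact hi (Finset.mem_filter.mpr ⟨Finset.mem_univ i, hne⟩)
  obtain h | h | h : s.card = 0 ∨ s.card = 1 ∨ s.card = 2 := by omega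
  · refine ⟨⟨0, hN⟩, ⟨0, hN⟩, fun i _ _ => hnotmem i ?_⟩
    rw [Finset.card_eq_zero.mp h]; exact Finset.notMem_empty i
  · obtain ⟨a, ha⟩ := Finset.card_eq_one.mp h
    refine ⟨a, a, fun i hia _ => hnotmem i ?_⟩
    rw [ha]; simpa using hia
  · obtain ⟨a, b, -, hab⟩ := Finset.card_eq_two.mp h
    refine ⟨a, b, fun i hia hib => hnotmem i ?_⟩
    rw [hab]; simp [hia, hib]
end

section
/- Lipschitz-type bound on the Bernoulli KL divergence in its first argument: let 0 < μ < y < ξ < 1. Then d(μ, ξ) − d(y, ξ) ≤ (y − μ)·log( ξ·(1−μ) / (μ·(1−ξ)) ), where d denotes the Bernoulli Kullback–Leibler divergence. -/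
/-- The Kullback–Leibler divergence between Bernoulli distributions with means `p`
and `q`. -/
noncomputable def klBern (p q : ℝ) : ℝ :=
  p * Real.log (p / q) + (1 - p) * Real.log ((1 - p) / (1 - q))

/-- Lipschitz-type bound on the Bernoulli KL divergence in its first argument: for
`0 < μ < y < ξ < 1`, `d(μ, ξ) - d(y, ξ) ≤ (y - μ) * log(ξ (1 - μ) / (μ (1 - ξ)))`. -/
theorem klBern_first_arg_lipschitz_bound
    (μ y ξ : ℝ) (hμ : 0 < μ) (hμy : μ < y) (hyξ : y < ξ) (hξ : ξ < 1) :
    klBern μ ξ - klBern y ξ ≤ (y - μ) * Real.log (ξ * (1 - μ) / (μ * (1 - ξ))) := by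
  have hy : 0 < y := hμ.trans hμy
  have hξ0 : 0 < ξ := hy.trans hyξ
  have h1μ : 0 < 1 - μ := by linarith
  have h1y : 0 < 1 - y := by linarith
  have h1ξ : 0 < 1 - ξ := by linarith
  -- nonnegativity of klBern y μ
  have key : 0 ≤ klBern y μ := by
    have l1 : Real.log (μ / y) ≤ μ / y - 1 :=
      Real.log_le_sub_one_of_pos (by positivity)
    have l2 : Real.log ((1 - μ) / (1 - y)) ≤ (1 - μ) / (1 - y) - 1 :=
      Real.log_le_sub_one_of_pos (by positivity)
    have e1 : Real.log (y / μ) = - Real.log (μ / y) := by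
      rw [← Real.log_inv]; congr 1; field_simp
    have e2 : Real.log ((1 - y) / (1 - μ)) = - Real.log ((1 - μ) / (1 - y)) := by
      rw [← Real.log_inv]; congr 1; field_simp
    have b1 : y - μ ≤ y * Real.log (y / μ) := by
      rw [e1]
      have := mul_le_mul_of_nonneg_left l1 hy.le
      have hμy' : y * (μ / y) = μ := by field_simp
      nlinarith
    have b2 : μ - y ≤ (1 - y) * Real.log ((1 - y) / (1 - μ)) := by
      rw [e2]
      have := mul_le_mul_of_nonneg_left l2 h1y.le
      have h' : (1 - y) * ((1 - μ) / (1 - y)) = 1 - μ := by field_simp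
      nlinarith
    unfold klBern
    linarith
  have expand : klBern μ ξ - klBern y ξ - (y - μ) * Real.log (ξ * (1 - μ) / (μ * (1 - ξ)))
      = -(klBern y μ) := by
    unfold klBern
    rw [Real.log_div hμ.ne' hξ0.ne', Real.log_div h1μ.ne' h1ξ.ne',
      Real.log_div hy.ne' hξ0.ne', Real.log_div h1y.ne' h1ξ.ne',
      Real.log_div (by positivity) (by positivity : μ * (1 - ξ) ≠ 0),
      Real.log_mul hξ0.ne' h1μ.ne', Real.log_mul hμ.ne' h1ξ.ne',
      Real.log_div hy.ne' hμ.ne', Real.log_div h1y.ne' h1μ.ne']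
    ring
  linarith
end

section
/- Gap bound for the threshold y (used in the proof of Theorem 1): let 0 < μ < y < ξ < 1 and γ ∈ (0,1], and suppose d(y, ξ) = d(μ, ξ)/(1+γ). Then y − μ ≥ (γ/(1+γ)) · d(μ, ξ) / log( ξ·(1−μ) / (μ·(1−ξ)) ), where d denotes the Bernoulli Kullback–Leibler divergence. -/
/-- Gap bound for the threshold `y` (used in the proof of Theorem 1): for
`0 < μ < y < ξ < 1`, `γ ∈ (0,1]` and `d(y, ξ) = d(μ, ξ)/(1+γ)`, one has
`y - μ ≥ (γ/(1+γ)) * d(μ, ξ) / log(ξ (1 - μ) / (μ (1 - ξ)))`. -/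
theorem threshold_gap_bound
    (μ y ξ γ : ℝ) (hμ : 0 < μ) (hμy : μ < y) (hyξ : y < ξ) (hξ : ξ < 1)
    (hγ : γ ∈ Set.Ioc (0 : ℝ) 1)
    (hy : klBern y ξ = klBern μ ξ / (1 + γ)) :
    (γ / (1 + γ)) * klBern μ ξ / Real.log (ξ * (1 - μ) / (μ * (1 - ξ))) ≤ y - μ := by
  obtain ⟨hγ0, hγ1⟩ := hγ
  have hy0 : 0 < y := hμ.trans hμy
  have hy1 : y < 1 := hyξ.trans hξ
  have hμ1 : μ < 1 := hμy.trans hy1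
  have hξ0 : 0 < ξ := hy0.trans hyξ
  have h1μ : 0 < 1 - μ := by linarith
  have h1y : 0 < 1 - y := by linarith
  have h1ξ : 0 < 1 - ξ := by linarith
  have hLpos : 0 < Real.log (ξ * (1 - μ) / (μ * (1 - ξ))) := by
    apply Real.log_pos
    rw [lt_div_iff₀ (by positivity)]
    nlinarith
  -- Gibbs: klBern y μ ≥ 0
  have hnn : 0 ≤ klBern y μ := by
    have h1 : Real.log (μ / y) ≤ μ / y - 1 := Real.log_le_sub_one_of_pos (by positivity)
    have h2 : Real.log ((1 - μ) / (1 - y)) ≤ (1 - μ) / (1 - y) - 1 :=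
      Real.log_le_sub_one_of_pos (by positivity)
    have e1 : Real.log (y / μ) = - Real.log (μ / y) := by
      rw [← Real.log_inv]; congr 1; field_simp
    have e2 : Real.log ((1 - y) / (1 - μ)) = - Real.log ((1 - μ) / (1 - y)) := by
      rw [← Real.log_inv]; congr 1; field_simp
    have hA : μ / y - 1 = (μ - y) / y := by field_simp
    have hB : (1 - μ) / (1 - y) - 1 = (y - μ) / (1 - y) := by field_simp; ring
    unfold klBern
    rw [e1, e2]
    have hA' : Real.log (μ / y) ≤ (μ - y) / y := hA ▸ h1
    have hB' : Real.log ((1 - μ) / (1 - y)) ≤ (y - μ) / (1 - y) := hB ▸ h2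
    have := mul_le_mul_of_nonneg_left hA' hy0.le
    have := mul_le_mul_of_nonneg_left hB' h1y.le
    have hyy : y * ((μ - y) / y) = μ - y := by field_simp
    have hyy' : (1 - y) * ((y - μ) / (1 - y)) = y - μ := by field_simp
    nlinarith
  -- key identity: (y-μ)*L - (klBern μ ξ - klBern y ξ) = klBern y μ
  have hid : (y - μ) * Real.log (ξ * (1 - μ) / (μ * (1 - ξ)))
      - (klBern μ ξ - klBern y ξ) = klBern y μ := by
    unfold klBern
    rw [Real.log_div (by positivity) (by positivity), Real.log_mul hξ0.ne' h1μ.ne',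
      Real.log_mul hμ.ne' h1ξ.ne', Real.log_div hμ.ne' hξ0.ne',
      Real.log_div h1μ.ne' h1ξ.ne', Real.log_div hy0.ne' hξ0.ne',
      Real.log_div h1y.ne' h1ξ.ne', Real.log_div hy0.ne' hμ.ne',
      Real.log_div h1y.ne' h1μ.ne']
    ring
  have key : klBern μ ξ - klBern y ξ ≤ (y - μ) * Real.log (ξ * (1 - μ) / (μ * (1 - ξ))) := by
    linarith
  rw [div_le_iff₀ hLpos]
  have hγs : (0 : ℝ) < 1 + γ := by linarith
  have hsplit : γ / (1 + γ) * klBern μ ξ = klBern μ ξ - klBern μ ξ / (1 + γ) := by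
    field_simp; ring
  rw [hsplit, ← hy]
  exact key
end

section
/- O(1/γ²) bound on the inverse KL divergence of the threshold (used in the proof of Theorem 1): let 0 < μ < y < ξ < 1 and γ ∈ (0,1], and suppose d(y, ξ) = d(μ, ξ)/(1+γ). Then d(y, μ) ≥ (y − μ)²/2, and consequently 1/d(y, μ) ≤ 2·(1+γ)² · ( log( ξ·(1−μ) / (μ·(1−ξ)) ) )² / ( γ² · d(μ, ξ)² ), where d denotes the Bernoulli Kullback–Leibler divergence. -/
/-- Weak Pinsker: `d(y,q) ≥ (y-q)²/2` for `0 < q ≤ y < 1`. -/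
lemma pinsker_half {q y : ℝ} (hq : 0 < q) (hqy : q ≤ y) (hy : y < 1) :
    (y - q) ^ 2 / 2 ≤ klBern y q := by
  have hy0 : 0 < y := lt_of_lt_of_le hq hqy
  have hy1 : (0:ℝ) < 1 - y := by linarith
  set g : ℝ → ℝ := fun x =>
    y * Real.log y - y * Real.log x + (1 - y) * Real.log (1 - y)
      - (1 - y) * Real.log (1 - x) - (y - x) ^ 2 / 2 with hg
  have hderiv : ∀ x, 0 < x → x < 1 → HasDerivAt g (-(y/x) + (1-y)/(1-x) + (y-x)) x := by
    intro x hx0 hxlt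
    have hx1 : 0 < 1 - x := by linarith
    have h1 : HasDerivAt (fun x : ℝ => y * Real.log x) (y * x⁻¹) x :=
      (Real.hasDerivAt_log hx0.ne').const_mul y
    have h2 : HasDerivAt (fun x : ℝ => Real.log (1 - x)) ((1-x)⁻¹ * (-1)) x :=
      (Real.hasDerivAt_log hx1.ne').comp x (by simpa using (hasDerivAt_id x).const_sub 1)
    have h2' : HasDerivAt (fun x : ℝ => (1 - y) * Real.log (1 - x))
        ((1-y) * ((1-x)⁻¹ * (-1))) x := h2.const_mul (1-y)
    have h3 : HasDerivAt (fun x : ℝ => (y - x) ^ 2 / 2) ((2 * (y - x) ^ 1 * (-1))/2) x :=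
      (((hasDerivAt_id x).const_sub y).pow 2).div_const 2
    have := (((hasDerivAt_const x (y * Real.log y)).sub h1).add
        (hasDerivAt_const x ((1 - y) * Real.log (1 - y)))).sub h2' |>.sub h3
    refine this.congr_deriv ?_
    ring
  have hanti : AntitoneOn g (Set.Icc q y) := by
    apply antitoneOn_of_deriv_nonpos (convex_Icc q y)
    · intro x hx
      exact (hderiv x (lt_of_lt_of_le hq hx.1) (lt_of_le_of_lt hx.2 hy)).continuousAt.continuousWithinAt
    · intro x hx
      rw [interior_Icc] at hx
      exact (hderiv x (lt_of_lt_of_le hq hx.1.le) (lt_trans hx.2 hy)).differentiableAt.differentiableWithinAt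
    · intro x hx
      rw [interior_Icc] at hx
      have hx0 : 0 < x := lt_of_lt_of_le hq hx.1.le
      have hx1 : 0 < 1 - x := by linarith [hx.2]
      rw [(hderiv x hx0 (by linarith [hx.2])).deriv]
      have heq : -(y/x) + (1-y)/(1-x) + (y-x) = (x - y) * (1 - x * (1-x)) / (x * (1-x)) := by
        field_simp; ring
      rw [heq]
      apply div_nonpos_of_nonpos_of_nonneg
      · nlinarith [hx.2, sq_nonneg (2*x - 1)]
      · positivity
  have hgy : g y = 0 := by simp [hg]
  have hgq : g q = klBern y q - (y - q) ^ 2 / 2 := by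
    have h1q : (0:ℝ) < 1 - q := by linarith
    simp only [hg, klBern, Real.log_div hy0.ne' hq.ne', Real.log_div hy1.ne' h1q.ne']
    ring
  have := hanti (Set.left_mem_Icc.2 hqy) (Set.right_mem_Icc.2 hqy) hqy
  rw [hgy, hgq] at this
  linarith

/-- `O(1/γ²)` bound on the inverse KL divergence at the threshold (used in the proof of
Theorem 1): for `0 < μ < y < ξ < 1`, `γ ∈ (0,1]` and `d(y, ξ) = d(μ, ξ)/(1+γ)`, one has
`d(y, μ) ≥ (y - μ)²/2`, and consequently
`1/d(y, μ) ≤ 2 (1+γ)² (log(ξ (1-μ)/(μ (1-ξ))))² / (γ² d(μ, ξ)²)`. -/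
theorem inverse_kl_threshold_bound
    (μ y ξ γ : ℝ) (hμ : 0 < μ) (hμy : μ < y) (hyξ : y < ξ) (hξ : ξ < 1)
    (hγ : γ ∈ Set.Ioc (0 : ℝ) 1)
    (hy : klBern y ξ = klBern μ ξ / (1 + γ)) :
    (y - μ) ^ 2 / 2 ≤ klBern y μ ∧
    1 / klBern y μ ≤
      2 * (1 + γ) ^ 2 * (Real.log (ξ * (1 - μ) / (μ * (1 - ξ)))) ^ 2
        / (γ ^ 2 * (klBern μ ξ) ^ 2) := by
  obtain ⟨hγ0, hγ1⟩ := hγ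
  have hy1 : y < 1 := lt_trans hyξ hξ
  have hμ1 : μ < 1 := lt_trans hμy hy1
  have hξ0 : 0 < ξ := lt_trans (lt_trans hμ hμy) hyξ
  have h1ξ : (0:ℝ) < 1 - ξ := by linarith
  have h1μ : (0:ℝ) < 1 - μ := by linarith
  have h1y : (0:ℝ) < 1 - y := by linarith
  have hy0 : 0 < y := lt_trans hμ hμy
  have part1 : (y - μ) ^ 2 / 2 ≤ klBern y μ := pinsker_half hμ hμy.le hy1
  refine ⟨part1, ?_⟩
  set L : ℝ := Real.log (ξ * (1 - μ) / (μ * (1 - ξ))) with hL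
  set D : ℝ := klBern μ ξ with hD
  -- identity: d(μ,ξ) - d(y,ξ) = (y-μ)L - d(y,μ)
  have hid : D - klBern y ξ = (y - μ) * L - klBern y μ := by
    simp only [hD, hL, klBern, Real.log_div hμ.ne' hξ0.ne', Real.log_div h1μ.ne' h1ξ.ne',
      Real.log_div hy0.ne' hξ0.ne', Real.log_div h1y.ne' h1ξ.ne',
      Real.log_div hy0.ne' hμ.ne', Real.log_div h1y.ne' h1μ.ne',
      Real.log_div (by positivity : (ξ * (1-μ)) ≠ 0) (by positivity : (μ * (1-ξ)) ≠ 0),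
      Real.log_mul hξ0.ne' h1μ.ne', Real.log_mul hμ.ne' h1ξ.ne']
    ring
  have hsym : klBern (1 - μ) (1 - ξ) = klBern μ ξ := by
    unfold klBern
    rw [show (1:ℝ) - (1 - μ) = μ from by ring, show (1:ℝ) - (1 - ξ) = ξ from by ring]
    ring
  have hDpos : 0 < D := by
    have h := pinsker_half h1ξ (by linarith : 1 - ξ ≤ 1 - μ) (by linarith : 1 - μ < 1)
    rw [hsym] at h
    have : 0 < ((1 - μ) - (1 - ξ)) ^ 2 / 2 := by nlinarith
    exact lt_of_lt_of_le this h
  have hklyμ : 0 < klBern y μ := by nlinarith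
  -- from hy : klBern y ξ = D/(1+γ)
  have hgap : D - klBern y ξ = γ / (1 + γ) * D := by
    rw [hy]; field_simp; ring
  have hyml : γ / (1 + γ) * D ≤ (y - μ) * L := by
    rw [← hgap, hid]; linarith
  have hLpos : 0 < L := by
    have h1 : 0 < γ / (1 + γ) * D := by positivity
    have h2 : 0 < (y - μ) * L := lt_of_lt_of_le h1 hyml
    by_contra h
    push_neg at h
    nlinarith
  have hyμpos : (0:ℝ) < y - μ := by linarith
  -- (y-μ) ≥ γ D / ((1+γ) L)
  have hkey : γ * D / ((1 + γ) * L) ≤ y - μ := by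
    rw [div_le_iff₀ (by positivity)]
    calc γ * D = γ / (1 + γ) * D * (1 + γ) := by field_simp
    _ ≤ (y - μ) * L * (1 + γ) := by nlinarith
    _ = (y - μ) * ((1 + γ) * L) := by ring
  have hc : γ ^ 2 * D ^ 2 / (2 * (1 + γ) ^ 2 * L ^ 2) ≤ klBern y μ := by
    refine le_trans ?_ part1
    rw [div_le_div_iff₀ (by positivity) (by norm_num)]
    have := mul_le_mul hkey hkey (by positivity) hyμpos.le
    rw [div_mul_div_comm] at this
    rw [div_le_iff₀ (by positivity)] at this
    nlinarith [this]
  have hcpos : 0 < γ ^ 2 * D ^ 2 / (2 * (1 + γ) ^ 2 * L ^ 2) := by positivity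
  calc 1 / klBern y μ ≤ 1 / (γ ^ 2 * D ^ 2 / (2 * (1 + γ) ^ 2 * L ^ 2)) :=
        one_div_le_one_div_of_le hcpos hc
    _ = 2 * (1 + γ) ^ 2 * L ^ 2 / (γ ^ 2 * D ^ 2) := by
        rw [one_div_div]
end

section
/- Slackness threshold characterization: let μ ∈ [0,1]^N, r ∈ (0,1]^N, with 0 < μ_1 < μ_2 ≤ 1 and r_1·μ_1 > r_2·μ_2, and set λ* = (r_1·μ_1 − r_2·μ_2)/(μ_2 − μ_1) and ν* = (r_1 − r_2)·μ_1·μ_2/(μ_2 − μ_1). For any arm i ∉ {1,2}, the quantity (r_i − r_2)·μ_2 − (r_i − r_1)·μ_1 is strictly positive, the threshold ξ_i := (r_1 − r_2)·μ_1·μ_2/((r_i − r_2)·μ_2 − (r_i − r_1)·μ_1) equals ν*/(r_i + λ*), and the strict dual slackness condition r_i·μ_i + λ*·μ_i < ν* holds if and only if μ_i < ξ_i. -/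
/-- Slackness threshold characterization: with arms `a` (arm 1) and `b` (arm 2)
satisfying `0 < μ a < μ b ≤ 1` and `r a * μ a > r b * μ b`, and dual variables
`λ* = (r a * μ a - r b * μ b)/(μ b - μ a)`, `ν* = (r a - r b) * μ a * μ b/(μ b - μ a)`,
for any other arm `i` the quantity `(r i - r b) * μ b - (r i - r a) * μ a` is strictly
positive, the threshold `ξ i := (r a - r b) * μ a * μ b / ((r i - r b) * μ b - (r i - r a) * μ a)`
equals `ν*/(r i + λ*)`, and the strict dual slackness `r i * μ i + λ* * μ i < ν*`
holds if and only if `μ i < ξ i`. -/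
theorem slackness_threshold_characterization
    (N : ℕ) (μ r : Fin N → ℝ) (a b : Fin N) (hab : a ≠ b)
    (hμ : ∀ i, μ i ∈ Set.Icc (0 : ℝ) 1)
    (hr : ∀ i, r i ∈ Set.Ioc (0 : ℝ) 1)
    (hμa : 0 < μ a) (hμab : μ a < μ b) (hμb : μ b ≤ 1)
    (hrev : r a * μ a > r b * μ b)
    (i : Fin N) (hia : i ≠ a) (hib : i ≠ b) :
    0 < (r i - r b) * μ b - (r i - r a) * μ a ∧
    (r a - r b) * μ a * μ b / ((r i - r b) * μ b - (r i - r a) * μ a)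
      = ((r a - r b) * μ a * μ b / (μ b - μ a))
        / (r i + (r a * μ a - r b * μ b) / (μ b - μ a)) ∧
    (r i * μ i + ((r a * μ a - r b * μ b) / (μ b - μ a)) * μ i
        < (r a - r b) * μ a * μ b / (μ b - μ a) ↔
      μ i < (r a - r b) * μ a * μ b / ((r i - r b) * μ b - (r i - r a) * μ a)) := by
  have hd : 0 < μ b - μ a := by linarith
  have hri : 0 < r i := (hr i).1
  have hD : 0 < (r i - r b) * μ b - (r i - r a) * μ a := by nlinarith
  have hDeq : (r i - r b) * μ b - (r i - r a) * μ a
      = (r i + (r a * μ a - r b * μ b) / (μ b - μ a)) * (μ b - μ a) := by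
    field_simp
    ring
  have hsum : 0 < r i + (r a * μ a - r b * μ b) / (μ b - μ a) := by
    by_contra h
    push_neg at h
    nlinarith [hDeq]
  refine ⟨hD, ?_, ?_⟩
  · rw [hDeq, div_div]
    congr 1
    ring
  · have h1 : (r a - r b) * μ a * μ b / (μ b - μ a) * (μ b - μ a)
        = (r a - r b) * μ a * μ b := div_mul_cancel₀ _ hd.ne'
    have h3 : (r a * μ a - r b * μ b) / (μ b - μ a) * μ i * (μ b - μ a)
        = (r a * μ a - r b * μ b) * μ i := by
      field_simp
    rw [← mul_lt_mul_iff_of_pos_right hd, lt_div_iff₀ hD]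
    constructor <;> intro h <;> nlinarith [h1, h3]
end
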